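/- Let q be an odd positive integer and c a positive even integer. Write c(c+2) = 2^{k+1} · m with m odd (so k ≥ 2). Then the squarefree part of [c]_q · [c+2]_q has the same parity (odd/even) as the squarefree part of c(c+2). In particular, [c]_q[c+2]_q and c(c+2) generate the same class in ℚ^×/(ℚ^×)² up to odd squarefree factors: their squarefree parts are both even or both odd. -/

import Mathlib

private lemma geom_nat (q n : ℕ) (hq : 1 ≤ q) :
    (q - 1) * (∑ i ∈ Finset.range n, q ^ i) = q ^ n - 1 := by
  have h1 : (1:ℕ) ≤ q ^ n := Nat.one_le_pow _ _ hq
  have hz := geom_sum_mul (q : ℤ) n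
  have hcast : ((q - 1 : ℕ) : ℤ) * ((∑ i ∈ Finset.range n, q ^ i : ℕ) : ℤ)
      = ((q ^ n - 1 : ℕ) : ℤ) := by
    push_cast [Nat.cast_sub hq, Nat.cast_sub h1]
    rw [mul_comm]
    exact_mod_cast hz
  exact_mod_cast hcast

private lemma vS (q c : ℕ) (hq1 : 1 < q) (hqodd : Odd q) (hceven : Even c) (hc0 : c ≠ 0) :
    padicValNat 2 (∑ i ∈ Finset.range c, q ^ i) + 1
      = padicValNat 2 (q + 1) + padicValNat 2 c := by
  obtain ⟨t, ht⟩ := hqodd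
  have hxy : 2 ∣ q - 1 := by omega
  have hx : ¬ 2 ∣ q := by omega
  have hLTE := padicValNat.pow_two_sub_pow (x := q) (y := 1) hq1 (by simpa using hxy)
    hx hc0 hceven
  simp only [one_pow] at hLTE
  have hq1' : (1:ℕ) ≤ q := le_of_lt hq1
  have hgeom := geom_nat q c hq1'
  have hSpos : 0 < ∑ i ∈ Finset.range c, q ^ i :=
    Finset.sum_pos (fun i _ => pow_pos (by omega) i) (Finset.nonempty_range_iff.mpr hc0)
  have hmul : padicValNat 2 ((q - 1) * (∑ i ∈ Finset.range c, q ^ i))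
      = padicValNat 2 (q - 1) + padicValNat 2 (∑ i ∈ Finset.range c, q ^ i) :=
    padicValNat.mul (by omega) (by omega)
  rw [hgeom] at hmul
  omega

private lemma parity_transfer (N d : ℕ) (hN : N ≠ 0) (hd : d ≠ 0)
    (h : ∃ r : ℚ, (N : ℚ) / (d : ℚ) = r ^ 2) :
    (Even (padicValNat 2 N) ↔ Even (padicValNat 2 d)) := by
  obtain ⟨r, hr⟩ := h
  have hdQ : (d : ℚ) ≠ 0 := Nat.cast_ne_zero.mpr hd
  have hNQ : (N : ℚ) ≠ 0 := Nat.cast_ne_zero.mpr hN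
  have hr0 : r ≠ 0 := by
    rintro rfl
    norm_num [div_eq_zero_iff, hNQ, hdQ] at hr
  have hN' : (N : ℚ) = (d : ℚ) * r ^ 2 := by
    field_simp at hr
    linarith
  have hval : padicValRat 2 ((N : ℚ)) = padicValRat 2 (d : ℚ) + padicValRat 2 (r ^ 2) := by
    rw [hN']
    exact padicValRat.mul hdQ (pow_ne_zero _ hr0)
  rw [padicValRat.pow r] at hval
  rw [padicValRat.of_nat, padicValRat.of_nat] at hval
  rw [Nat.even_iff, Nat.even_iff]
  omega

private lemma sqf_odd (d : ℕ) (hd : Squarefree d) : Odd d ↔ Even (padicValNat 2 d) := by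
  have hd0 : d ≠ 0 := hd.ne_zero
  have hle : padicValNat 2 d ≤ 1 := by
    by_contra h
    push_neg at h
    have h4 : 2 * 2 ∣ d := by
      have : (2:ℕ) ^ 2 ∣ 2 ^ padicValNat 2 d := pow_dvd_pow 2 h
      calc (2:ℕ) * 2 = 2 ^ 2 := by ring
        _ ∣ 2 ^ padicValNat 2 d := this
        _ ∣ d := pow_padicValNat_dvd
    exact absurd (Nat.isUnit_iff.mp (hd 2 h4)) (by omega)
  constructor
  · intro hodd
    have : ¬ (2 ∣ d) := by
      rw [Nat.odd_iff] at hodd; omega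
    rw [padicValNat.eq_zero_of_not_dvd this]
    exact Even.zero
  · intro heven
    rw [Nat.odd_iff]
    by_contra h
    have h2 : 2 ∣ d := by omega
    have := one_le_padicValNat_of_dvd hd0 h2
    have : padicValNat 2 d = 1 := by omega
    rw [this] at heven
    simp at heven

theorem even_c_squarefree_part_parity (q : ℕ) (hqodd : Odd q) (hqpos : 0 < q)
    (c : ℕ) (hcpos : 0 < c) (hceven : Even c)
    (k m : ℕ) (hm : Odd m) (hfact : c * (c + 2) = 2 ^ (k + 1) * m)
    (a' b' : ℕ) (ha' : Squarefree a') (hb' : Squarefree b')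
    (ha : ∃ r : ℚ, (((∑ i ∈ Finset.range c, q ^ i) * (∑ i ∈ Finset.range (c + 2), q ^ i) : ℕ) : ℚ)
        / (a' : ℚ) = r ^ 2)
    (hb : ∃ s : ℚ, ((c * (c + 2) : ℕ) : ℚ) / (b' : ℚ) = s ^ 2) :
    (Odd a' ↔ Odd b') := by
  have hS1pos : 0 < ∑ i ∈ Finset.range c, q ^ i :=
    Finset.sum_pos (fun i _ => pow_pos hqpos i) (Finset.nonempty_range_iff.mpr hcpos.ne')
  have hS2pos : 0 < ∑ i ∈ Finset.range (c + 2), q ^ i :=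
    Finset.sum_pos (fun i _ => pow_pos hqpos i) (by simp)
  have hApos : (∑ i ∈ Finset.range c, q ^ i) * (∑ i ∈ Finset.range (c + 2), q ^ i) ≠ 0 :=
    Nat.mul_ne_zero hS1pos.ne' hS2pos.ne'
  have hBpos : c * (c + 2) ≠ 0 := by positivity
  rw [sqf_odd a' ha', sqf_odd b' hb',
    ← parity_transfer _ a' hApos ha'.ne_zero ha,
    ← parity_transfer _ b' hBpos hb'.ne_zero hb]
  have hvA := padicValNat.mul (p := 2) hS1pos.ne' hS2pos.ne'
  have hvB := padicValNat.mul (p := 2) (a := c) (b := c + 2) (by omega) (by omega)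
  rcases eq_or_lt_of_le (Nat.one_le_iff_ne_zero.mpr hqpos.ne') with hq1 | hq1
  · -- q = 1
    have hq1' : q = 1 := hq1.symm
    subst hq1'
    simp only [one_pow, Finset.sum_const, Finset.card_range, smul_eq_mul, mul_one]
  · -- 1 < q
    have h1 := vS q c hq1 hqodd hceven hcpos.ne'
    have h2 := vS q (c + 2) hq1 hqodd (by obtain ⟨t, ht⟩ := hceven; exact ⟨t + 1, by omega⟩)
      (by omega)
    rw [hvA, hvB, Nat.even_iff, Nat.even_iff]
    omega
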